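/- Fix μ ∈ ℝ, σ > 0 and c ∈ ℝ. Then the quantity (μ - (1 - P(μ, σ, c - δ))·(c - δ)) / P(μ, σ, c - δ), which is the conditional expectation of the agent's quality given that its reputation never hits the subsidized threshold c - δ, tends to μ as δ tends to +∞. -/

import Mathlib

open Real MeasureTheory Filter Topology

/-- Standard normal density φ(x) = exp(-x²/2)/√(2π). -/
noncomputable def stdPdf (x : ℝ) : ℝ := Real.exp (-(x ^ 2) / 2) / Real.sqrt (2 * Real.pi)

/-- Standard normal CDF Φ(x) = ∫_{-∞}^x φ(u) du. -/
noncomputable def stdCdf (x : ℝ) : ℝ := ∫ u in Set.Iio x, stdPdf u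

/-- P(μ, σ, c): probability that an agent with prior N(μ, σ²) and link cost c
is never ostracized (Proposition 1). -/
noncomputable def Pstay (μ σ c : ℝ) : ℝ :=
  ∫ q in Set.Ioi c, (1 - Real.exp (-(2 / σ ^ 2) * (μ - c) * (q - c))) * stdPdf ((q - μ) / σ) / σ

namespace Stmt16Aux

open scoped NNReal
open ProbabilityTheory

/-- the variance as a nonnegative real -/
noncomputable def V (σ : ℝ) : ℝ≥0 := ⟨σ ^ 2, sq_nonneg σ⟩

lemma coeV (σ : ℝ) : ((V σ : ℝ≥0) : ℝ) = σ ^ 2 := rfl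

lemma sqrt_two_pi_v {σ : ℝ} (hσ : 0 < σ) :
    Real.sqrt (2 * Real.pi * σ ^ 2) = Real.sqrt (2 * Real.pi) * σ := by
  rw [Real.sqrt_mul (by positivity), Real.sqrt_sq hσ.le]

/-- pointwise identity: the integrand of `Pstay` is a difference of two gaussian pdfs. -/
lemma integrand_eq {μ σ : ℝ} (hσ : 0 < σ) (t q : ℝ) :
    (1 - Real.exp (-(2 / σ ^ 2) * (μ - t) * (q - t))) * stdPdf ((q - μ) / σ) / σ
      = gaussianPDFReal μ (V σ) q - gaussianPDFReal (2 * t - μ) (V σ) q := by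
  have hσ' : σ ≠ 0 := hσ.ne'
  have hS : (0:ℝ) < Real.sqrt (2 * Real.pi) := Real.sqrt_pos.mpr (by positivity)
  have h1 : stdPdf ((q - μ) / σ) = Real.exp (-(q - μ) ^ 2 / (2 * σ ^ 2)) / Real.sqrt (2 * Real.pi) := by
    unfold stdPdf
    have h : (-(((q - μ) / σ) ^ 2) / 2) = -(q - μ) ^ 2 / (2 * σ ^ 2) := by
      rw [div_pow, neg_div, div_div, mul_comm, neg_div]
    rw [h]
  have hE : Real.exp (-(2 / σ ^ 2) * (μ - t) * (q - t)) * Real.exp (-(q - μ) ^ 2 / (2 * σ ^ 2))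
      = Real.exp (-(q - (2 * t - μ)) ^ 2 / (2 * σ ^ 2)) := by
    rw [← Real.exp_add]
    congr 1
    field_simp
    ring
  unfold gaussianPDFReal
  rw [coeV, sqrt_two_pi_v hσ, h1, ← hE]
  field_simp

/-- bound for the left tail of a gaussian pdf integral -/
lemma gauss_le_exp {σ : ℝ} (hσ : 0 < σ) (m x : ℝ) :
    gaussianPDFReal m (V σ) x
      ≤ (Real.sqrt (2 * Real.pi) * σ)⁻¹ * Real.exp (σ ^ 2 / 2) * Real.exp (x - m) := by
  unfold gaussianPDFReal
  rw [coeV, sqrt_two_pi_v hσ, mul_assoc, ← Real.exp_add]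
  refine mul_le_mul_of_nonneg_left ?_ (by positivity)
  refine Real.exp_le_exp.mpr ?_
  rw [div_le_iff₀ (by positivity)]
  nlinarith [sq_nonneg ((x - m) - σ ^ 2), sq_nonneg ((x - m) + σ ^ 2)]

lemma gauss_le_exp_neg {σ : ℝ} (hσ : 0 < σ) (m x : ℝ) :
    gaussianPDFReal m (V σ) x
      ≤ (Real.sqrt (2 * Real.pi) * σ)⁻¹ * Real.exp (σ ^ 2 / 2) * Real.exp (m - x) := by
  unfold gaussianPDFReal
  rw [coeV, sqrt_two_pi_v hσ, mul_assoc, ← Real.exp_add]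
  refine mul_le_mul_of_nonneg_left ?_ (by positivity)
  refine Real.exp_le_exp.mpr ?_
  rw [div_le_iff₀ (by positivity)]
  nlinarith [sq_nonneg ((x - m) - σ ^ 2), sq_nonneg ((x - m) + σ ^ 2)]

/-- the constant in the tail bounds -/
noncomputable def K (σ : ℝ) : ℝ := (Real.sqrt (2 * Real.pi) * σ)⁻¹ * Real.exp (σ ^ 2 / 2)

lemma K_pos {σ : ℝ} (hσ : 0 < σ) : 0 < K σ := by
  unfold K
  have : (0:ℝ) < Real.sqrt (2 * Real.pi) := Real.sqrt_pos.mpr (by positivity)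
  positivity

lemma iic_bound {σ : ℝ} (hσ : 0 < σ) (m t : ℝ) :
    ∫ x in Set.Iic t, gaussianPDFReal m (V σ) x ≤ K σ * Real.exp (t - m) := by
  have hint : IntegrableOn (fun x => K σ * (Real.exp x / Real.exp m)) (Set.Iic t) := by
    exact (((integrableOn_exp_Iic t).div_const (Real.exp m)).const_mul (K σ))
  calc ∫ x in Set.Iic t, gaussianPDFReal m (V σ) x
      ≤ ∫ x in Set.Iic t, K σ * (Real.exp x / Real.exp m) := by
        refine setIntegral_mono ((integrable_gaussianPDFReal m (V σ)).integrableOn) hint ?_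
        intro x
        have := gauss_le_exp hσ m x
        rw [Real.exp_sub] at this
        exact this
    _ = K σ * Real.exp (t - m) := by
        rw [MeasureTheory.integral_const_mul, integral_div, integral_exp_Iic, ← Real.exp_sub]

lemma ioi_bound {σ : ℝ} (hσ : 0 < σ) (m t : ℝ) :
    ∫ x in Set.Ioi t, gaussianPDFReal m (V σ) x ≤ K σ * Real.exp (m - t) := by
  have hint : IntegrableOn (fun x => K σ * Real.exp m * Real.exp (-x)) (Set.Ioi t) := by
    have h := (exp_neg_integrableOn_Ioi t (by norm_num : (0:ℝ) < 1)).const_mul (K σ * Real.exp m)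
    simp at h; exact h
  calc ∫ x in Set.Ioi t, gaussianPDFReal m (V σ) x
      ≤ ∫ x in Set.Ioi t, K σ * Real.exp m * Real.exp (-x) := by
        refine setIntegral_mono ((integrable_gaussianPDFReal m (V σ)).integrableOn) hint ?_
        intro x
        have := gauss_le_exp_neg hσ m x
        calc gaussianPDFReal m (V σ) x ≤ K σ * Real.exp (m - x) := this
          _ = K σ * Real.exp m * Real.exp (-x) := by
              rw [mul_assoc, ← Real.exp_add]; ring_nf
    _ = K σ * Real.exp (m - t) := by
        rw [MeasureTheory.integral_const_mul, integral_exp_neg_Ioi, mul_assoc, ← Real.exp_add]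
        ring_nf

/-- Pstay in terms of gaussian tails -/
lemma pstay_eq {μ σ : ℝ} (hσ : 0 < σ) (t : ℝ) :
    Pstay μ σ t = 1 - ((∫ x in Set.Iic t, gaussianPDFReal μ (V σ) x)
      + ∫ x in Set.Ioi t, gaussianPDFReal (2 * t - μ) (V σ) x) := by
  have h1 : Pstay μ σ t = ∫ q in Set.Ioi t,
      (gaussianPDFReal μ (V σ) q - gaussianPDFReal (2 * t - μ) (V σ) q) := by
    unfold Pstay
    exact setIntegral_congr_fun measurableSet_Ioi (fun q _ => integrand_eq hσ t q)
  rw [h1, integral_sub ((integrable_gaussianPDFReal μ (V σ)).integrableOn)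
      ((integrable_gaussianPDFReal (2 * t - μ) (V σ)).integrableOn)]
  have htot : (∫ x in Set.Iic t, gaussianPDFReal μ (V σ) x)
      + ∫ x in Set.Ioi t, gaussianPDFReal μ (V σ) x = 1 := by
    rw [intervalIntegral.integral_Iic_add_Ioi ((integrable_gaussianPDFReal μ (V σ)).integrableOn)
      ((integrable_gaussianPDFReal μ (V σ)).integrableOn)]
    exact integral_gaussianPDFReal_eq_one μ (by
      simp only [V, ne_eq, ← NNReal.coe_eq_zero, NNReal.coe_mk]
      exact fun h => pow_ne_zero 2 hσ.ne' (congrArg (fun y : ℝ≥0 => (y : ℝ)) h))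
  linarith

end Stmt16Aux

/-- the conditional expected quality given never hitting the subsidized
threshold c - δ, namely (μ - (1 - P(μ,σ,c-δ))·(c-δ))/P(μ,σ,c-δ), tends to μ as δ → ∞. -/
theorem stmt_16 (μ σ c : ℝ) (hσ : 0 < σ) :
    Tendsto (fun δ : ℝ =>
        (μ - (1 - Pstay μ σ (c - δ)) * (c - δ)) / Pstay μ σ (c - δ))
      atTop (𝓝 μ) := by
  classical
  open Stmt16Aux ProbabilityTheory in
  -- `D δ` is the "defect" `1 - Pstay μ σ (c - δ)`
  set D : ℝ → ℝ := fun δ =>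
    (∫ x in Set.Iic (c - δ), gaussianPDFReal μ (V σ) x)
      + ∫ x in Set.Ioi (c - δ), gaussianPDFReal (2 * (c - δ) - μ) (V σ) x with hD
  have hPD : ∀ δ, Pstay μ σ (c - δ) = 1 - D δ := fun δ => pstay_eq hσ (c - δ)
  have hD0 : ∀ δ, 0 ≤ D δ := by
    intro δ
    have h1 : 0 ≤ ∫ x in Set.Iic (c - δ), gaussianPDFReal μ (V σ) x :=
      setIntegral_nonneg measurableSet_Iic (fun x _ => gaussianPDFReal_nonneg _ _ x)
    have h2 : 0 ≤ ∫ x in Set.Ioi (c - δ), gaussianPDFReal (2 * (c - δ) - μ) (V σ) x :=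
      setIntegral_nonneg measurableSet_Ioi (fun x _ => gaussianPDFReal_nonneg _ _ x)
    simpa [hD] using add_nonneg h1 h2
  have hDle : ∀ δ, D δ ≤ 2 * K σ * Real.exp (c - δ - μ) := by
    intro δ
    have h1 := iic_bound hσ μ (c - δ)
    have h2 := ioi_bound hσ (2 * (c - δ) - μ) (c - δ)
    have h2' : (2 * (c - δ) - μ) - (c - δ) = c - δ - μ := by ring
    rw [h2'] at h2
    have := add_le_add h1 h2
    simpa [hD, two_mul, add_mul] using this
  -- c - δ - μ → -∞, hence exp of it → 0
  have hbot : Tendsto (fun δ : ℝ => c - δ - μ) atTop atBot := by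
    have : Tendsto (fun δ : ℝ => -δ + (c - μ)) atTop atBot :=
      tendsto_atBot_add_const_right _ (c - μ) tendsto_neg_atTop_atBot
    refine this.congr (fun δ => by ring)
  have hexp : Tendsto (fun δ : ℝ => Real.exp (c - δ - μ)) atTop (𝓝 0) :=
    Real.tendsto_exp_atBot.comp hbot
  -- D → 0
  have hDlim : Tendsto D atTop (𝓝 0) := by
    refine squeeze_zero hD0 hDle ?_
    have := hexp.const_mul (2 * K σ)
    simpa using this
  -- D δ * (c - δ) → 0
  have hDmul : Tendsto (fun δ => D δ * (c - δ)) atTop (𝓝 0) := by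
    have hg : Tendsto (fun δ : ℝ => 2 * K σ * Real.exp (c - μ) * (δ * Real.exp (-δ) - c * Real.exp (-δ)))
        atTop (𝓝 0) := by
      have h1 : Tendsto (fun δ : ℝ => δ * Real.exp (-δ)) atTop (𝓝 0) := by
        have := Real.tendsto_pow_mul_exp_neg_atTop_nhds_zero 1
        simpa using this
      have h2 : Tendsto (fun δ : ℝ => c * Real.exp (-δ)) atTop (𝓝 0) := by
        have := (Real.tendsto_exp_atBot.comp tendsto_neg_atTop_atBot).const_mul c
        simpa [Function.comp] using this
      have := ((h1.sub h2).const_mul (2 * K σ * Real.exp (c - μ)))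
      simpa using this
    refine squeeze_zero_norm' ?_ hg
    filter_upwards [eventually_ge_atTop c] with δ hδ
    have hle : D δ * (δ - c) ≤ 2 * K σ * Real.exp (c - δ - μ) * (δ - c) :=
      mul_le_mul_of_nonneg_right (hDle δ) (by linarith)
    have hnorm : ‖D δ * (c - δ)‖ = D δ * (δ - c) := by
      rw [Real.norm_eq_abs, abs_mul, abs_of_nonneg (hD0 δ)]
      congr 1
      rw [abs_of_nonpos (by linarith)]
      ring
    have hexp_bound : Real.exp (c - δ - μ) ≤ Real.exp (c - μ) * Real.exp (-δ) := by
      rw [← Real.exp_add]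
      exact Real.exp_le_exp.mpr (by linarith)
    have h2K : (0:ℝ) ≤ 2 * K σ := by have := K_pos hσ; linarith
    calc ‖D δ * (c - δ)‖ = D δ * (δ - c) := hnorm
      _ ≤ 2 * K σ * Real.exp (c - δ - μ) * (δ - c) := hle
      _ ≤ 2 * K σ * (Real.exp (c - μ) * Real.exp (-δ)) * (δ - c) := by
          refine mul_le_mul_of_nonneg_right (mul_le_mul_of_nonneg_left hexp_bound h2K) (by linarith)
      _ = 2 * K σ * Real.exp (c - μ) * (δ * Real.exp (-δ) - c * Real.exp (-δ)) := by ring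
  -- assemble
  have hfun : (fun δ : ℝ => (μ - (1 - Pstay μ σ (c - δ)) * (c - δ)) / Pstay μ σ (c - δ))
      = fun δ => (μ - D δ * (c - δ)) / (1 - D δ) := by
    funext δ
    rw [hPD δ]
    ring_nf
  rw [hfun]
  have hnum : Tendsto (fun δ => μ - D δ * (c - δ)) atTop (𝓝 μ) := by
    have := (tendsto_const_nhds (x := μ) (f := atTop (α := ℝ))).sub hDmul
    simpa using this
  have hden : Tendsto (fun δ => 1 - D δ) atTop (𝓝 1) := by
    have := (tendsto_const_nhds (x := (1:ℝ)) (f := atTop (α := ℝ))).sub hDlim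
    simpa using this
  have := hnum.div hden one_ne_zero
  rw [div_one] at this
  exact this
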